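/- Let n ≥ 3 and let η = e^{2πi/n}. Then: (a) for every 1 ≤ i < n/2, the number 1 is not a root of the polynomial g with (X−1)(X−η^{i})(X−η^{−i})·g = ((1−η^{i})(1−η^{−i})/n)·X(X+1)(X^{n}−1); (b) for all 1 ≤ a < b < n−a, the number 1 is a root of multiplicity exactly 2 of the polynomial D with (X−η^{a})(X−η^{−a})(X−η^{b})(X−η^{−b})·D = ((η^{a}+η^{−a}−η^{b}−η^{−b})/n)·X(X²−1)(X^{n}−1); and (c) if n is even, the polynomial h with (X²−1)·h = (2/n)·X(X^{n}−1) satisfies h(1) ≠ 0. Hence no generic degree of a unipotent character of I₂(n,q) is divisible by (X−1) to exactly the first power, so there are no unipotent Φ₁-blocks of I₂(n,q) with cyclic defect group (of weight 1). -/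

import Mathlib

open Polynomial

private lemma geom_fact (n : ℕ) :
    ((X : ℂ[X]) ^ n - 1) = (X - 1) * ∑ i ∈ Finset.range n, X ^ i := by
  rw [mul_comm, geom_sum_mul]

private lemma eval_S (n : ℕ) : (∑ i ∈ Finset.range n, (X : ℂ[X]) ^ i).eval 1 = n := by
  simp

private lemma rm_of_ne {p : ℂ[X]} (hp : p.eval 1 ≠ 0) : p.rootMultiplicity 1 = 0 :=
  rootMultiplicity_eq_zero hp

private lemma rm_pow_sub_one {n : ℕ} (hn : 0 < n) :
    ((X : ℂ[X]) ^ n - 1).rootMultiplicity 1 = 1 := by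
  have hne : ((X : ℂ[X]) ^ n - 1) ≠ 0 := by
    have := X_pow_sub_C_ne_zero (R := ℂ) hn 1
    simpa using this
  rw [geom_fact] at hne ⊢
  rw [rootMultiplicity_mul hne]
  have h1 : ((X : ℂ[X]) - 1).rootMultiplicity 1 = 1 := by
    have := rootMultiplicity_X_sub_C_self (R := ℂ) (x := 1)
    simpa using this
  have h2 : (∑ i ∈ Finset.range n, (X : ℂ[X]) ^ i).rootMultiplicity 1 = 0 := by
    apply rm_of_ne
    rw [eval_S]
    exact Nat.cast_ne_zero.mpr hn.ne'
  rw [h1, h2]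

theorem no_weight_one_Phi1_blocks (n : ℕ) (hn : 3 ≤ n) (η : ℂ)
    (hη : η = Complex.exp (2 * Real.pi * Complex.I / (n : ℂ))) :
    (∀ i : ℕ, 1 ≤ i → 2 * i < n → ∀ g : ℂ[X],
      (X - 1) * (X - C (η ^ i)) * (X - C ((η ^ i)⁻¹)) * g =
        C ((1 - η ^ i) * (1 - (η ^ i)⁻¹) / (n : ℂ)) * (X * (X + 1) * (X ^ n - 1)) →
      g.eval 1 ≠ 0) ∧
    (∀ a b : ℕ, 1 ≤ a → a < b → a + b < n → ∀ D : ℂ[X],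
      (X - C (η ^ a)) * (X - C ((η ^ a)⁻¹)) * (X - C (η ^ b)) * (X - C ((η ^ b)⁻¹)) * D =
        C ((η ^ a + (η ^ a)⁻¹ - η ^ b - (η ^ b)⁻¹) / (n : ℂ)) *
          (X * (X ^ 2 - 1) * (X ^ n - 1)) →
      D.rootMultiplicity 1 = 2) ∧
    (Even n → ∀ h : ℂ[X],
      ((X : ℂ[X]) ^ 2 - 1) * h = C (2 / (n : ℂ)) * (X * (X ^ n - 1)) →
      h.eval 1 ≠ 0) := by
  have hn0 : (n : ℂ) ≠ 0 := Nat.cast_ne_zero.mpr (by omega)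
  have hprim : IsPrimitiveRoot η n := by
    rw [hη]; exact Complex.isPrimitiveRoot_exp n (by omega)
  have hη0 : η ≠ 0 := hprim.ne_zero (by omega)
  have hpow_ne : ∀ k : ℕ, 0 < k → k < n → η ^ k ≠ 1 := fun k hk hkn =>
    hprim.pow_ne_one_of_pos_of_lt hk.ne' hkn
  have hX1 : ((X : ℂ[X]) - 1) ≠ 0 := by
    have := X_sub_C_ne_zero (R := ℂ) 1; simpa using this
  refine ⟨?_, ?_, ?_⟩
  · -- part (a)
    intro i hi1 hi2 g heq
    have hηi : η ^ i ≠ 1 := hpow_ne i (by omega) (by omega)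
    have hηi' : (η ^ i)⁻¹ ≠ 1 := fun h => hηi (inv_eq_one.mp h)
    -- cancel X - 1
    have key : (X - C (η ^ i)) * (X - C ((η ^ i)⁻¹)) * g =
        C ((1 - η ^ i) * (1 - (η ^ i)⁻¹) / (n : ℂ)) *
          (X * (X + 1) * ∑ j ∈ Finset.range n, X ^ j) := by
      apply mul_left_cancel₀ hX1
      rw [geom_fact n] at heq
      linear_combination heq
    have hev := congrArg (eval 1) key
    simp only [eval_mul, eval_sub, eval_add, eval_X, eval_C, eval_one, eval_geom_sum,
      one_pow, Finset.sum_const, Finset.card_range, nsmul_eq_mul, mul_one] at hev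
    intro hg0
    rw [hg0, mul_zero] at hev
    have h1i : (1 : ℂ) - η ^ i ≠ 0 := sub_ne_zero.mpr (Ne.symm hηi)
    have h1i' : (1 : ℂ) - (η ^ i)⁻¹ ≠ 0 := sub_ne_zero.mpr (Ne.symm hηi')
    refine absurd hev.symm (mul_ne_zero (div_ne_zero (mul_ne_zero h1i h1i') hn0) ?_)
    simp [hn0]
  · -- part (b)
    intro a b ha hab habn D heq
    have hηa : η ^ a ≠ 1 := hpow_ne a (by omega) (by omega)
    have hηb : η ^ b ≠ 1 := hpow_ne b (by omega) (by omega)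
    have hηa' : (η ^ a)⁻¹ ≠ 1 := fun h => hηa (inv_eq_one.mp h)
    have hηb' : (η ^ b)⁻¹ ≠ 1 := fun h => hηb (inv_eq_one.mp h)
    set c : ℂ := (η ^ a + (η ^ a)⁻¹ - η ^ b - (η ^ b)⁻¹) / (n : ℂ) with hc
    have hx0 : η ^ a ≠ 0 := pow_ne_zero _ hη0
    have hy0 : η ^ b ≠ 0 := pow_ne_zero _ hη0
    have hc0 : c ≠ 0 := by
      rw [hc]
      intro h
      rw [_root_.div_eq_zero_iff] at h
      rcases h with h | h
      · have e1 : η ^ a * (η ^ a)⁻¹ = 1 := mul_inv_cancel₀ hx0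
        have e2 : η ^ b * (η ^ b)⁻¹ = 1 := mul_inv_cancel₀ hy0
        have key : (η ^ a - η ^ b) * (η ^ a * η ^ b - 1) = 0 := by
          linear_combination (η ^ a * η ^ b) * h - η ^ b * e1 + η ^ a * e2
        rcases mul_eq_zero.mp key with h2 | h2
        · have : η ^ a = η ^ b := sub_eq_zero.mp h2
          exact absurd (hprim.pow_inj (by omega) (by omega) this) (by omega)
        · have : η ^ (a + b) = 1 := by
            rw [pow_add]; exact sub_eq_zero.mp h2
          exact hpow_ne (a + b) (by omega) habn this
      · exact hn0 h
    -- nonvanishing of RHS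
    have hRHS_ne : C c * ((X : ℂ[X]) * (X ^ 2 - 1) * (X ^ n - 1)) ≠ 0 := by
      apply mul_ne_zero (C_ne_zero.mpr hc0)
      apply mul_ne_zero (mul_ne_zero X_ne_zero ?_) ?_
      · have := X_pow_sub_C_ne_zero (R := ℂ) (n := 2) (by norm_num) 1; simpa using this
      · have := X_pow_sub_C_ne_zero (R := ℂ) (n := n) (by omega) 1; simpa using this
    have hLHS_ne : (X - C (η ^ a)) * (X - C ((η ^ a)⁻¹)) * (X - C (η ^ b)) *
        (X - C ((η ^ b)⁻¹)) * D ≠ 0 := heq ▸ hRHS_ne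
    have hrm := congrArg (rootMultiplicity 1) heq
    -- compute LHS root multiplicity
    have rma : ((X : ℂ[X]) - C (η ^ a)).rootMultiplicity 1 = 0 :=
      rm_of_ne (by simp [sub_eq_zero]; exact fun h => hηa h.symm)
    have rma' : ((X : ℂ[X]) - C ((η ^ a)⁻¹)).rootMultiplicity 1 = 0 := by
      apply rm_of_ne
      simp only [eval_sub, eval_X, eval_C, sub_ne_zero]
      exact fun h => hηa' h.symm
    have rmb : ((X : ℂ[X]) - C (η ^ b)).rootMultiplicity 1 = 0 :=
      rm_of_ne (by simp [sub_eq_zero]; exact fun h => hηb h.symm)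
    have rmb' : ((X : ℂ[X]) - C ((η ^ b)⁻¹)).rootMultiplicity 1 = 0 := by
      apply rm_of_ne
      simp only [eval_sub, eval_X, eval_C, sub_ne_zero]
      exact fun h => hηb' h.symm
    have hL : ((X - C (η ^ a)) * (X - C ((η ^ a)⁻¹)) * (X - C (η ^ b)) *
        (X - C ((η ^ b)⁻¹)) * D).rootMultiplicity 1 = D.rootMultiplicity 1 := by
      rw [rootMultiplicity_mul hLHS_ne,
        rootMultiplicity_mul (left_ne_zero_of_mul hLHS_ne),
        rootMultiplicity_mul (left_ne_zero_of_mul (left_ne_zero_of_mul hLHS_ne)),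
        rootMultiplicity_mul
          (left_ne_zero_of_mul (left_ne_zero_of_mul (left_ne_zero_of_mul hLHS_ne))),
        rma, rma', rmb, rmb']
      omega
    have hR : (C c * ((X : ℂ[X]) * (X ^ 2 - 1) * (X ^ n - 1))).rootMultiplicity 1 = 2 := by
      rw [rootMultiplicity_mul hRHS_ne,
        rootMultiplicity_mul (right_ne_zero_of_mul hRHS_ne),
        rootMultiplicity_mul (left_ne_zero_of_mul (right_ne_zero_of_mul hRHS_ne))]
      rw [rm_of_ne (p := C c) (by simpa using hc0),
        rm_of_ne (p := (X : ℂ[X])) (by simp),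
        rm_pow_sub_one (n := 2) (by norm_num), rm_pow_sub_one (by omega : 0 < n)]
    rw [hL, hR] at hrm
    exact hrm
  · -- part (c)
    intro hne h heq
    have key : ((X : ℂ[X]) + 1) * h = C (2 / (n : ℂ)) * (X * ∑ j ∈ Finset.range n, X ^ j) := by
      apply mul_left_cancel₀ hX1
      rw [geom_fact n] at heq
      have : ((X : ℂ[X]) ^ 2 - 1) = (X - 1) * (X + 1) := by ring
      linear_combination heq
    have hev := congrArg (eval 1) key
    simp only [eval_mul, eval_add, eval_X, eval_C, eval_one, eval_geom_sum, one_pow,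
      Finset.sum_const, Finset.card_range, nsmul_eq_mul, mul_one] at hev
    intro hh0
    rw [hh0, mul_zero] at hev
    field_simp at hev
    norm_num at hev
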